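/- Let (S_G, M_G) be a quantum graph on M_n(ℂ) and (S_H, M_H) a quantum graph on M_m(ℂ), and let their lexicographic product be the quantum graph (S_K, M_K) on M_{nm}(ℂ) with M_K = M_G ⊗ M_H and S_K = S_G ⊗ M_m(ℂ) + M_G' ⊗ S_H. If (S_H, M_H) admits a quantum b-coloring and (S_G, M_G) admits a quantum b-fold coloring using c colors, then (S_K, M_K) admits a quantum c-coloring. Consequently, χ_q(S_K, M_K) ≤ χ_{b,q}(S_G, M_G) where b = χ_q(S_H, M_H). -/

import Mathlib

open Matrix Kronecker BigOperators

noncomputable section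

/-- The commutant of a set of matrices in `M_I(ℂ)`. -/
def commutant {I : Type*} [Fintype I] (M : Set (Matrix I I ℂ)) : Set (Matrix I I ℂ) :=
  {Y | ∀ A ∈ M, Y * A = A * Y}

/-- The ℂ-linear span of Kronecker products `v ⊗ₖ w` with `v ∈ V`, `w ∈ W`. -/
def tensorSpan {I J : Type*} [Fintype I] [Fintype J]
    (V : Set (Matrix I I ℂ)) (W : Set (Matrix J J ℂ)) :
    Submodule ℂ (Matrix (I × J) (I × J) ℂ) :=
  Submodule.span ℂ {x | ∃ v ∈ V, ∃ w ∈ W, x = v ⊗ₖ w}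

/-- A pair `(S, M)` is a quantum graph: `S` is closed under conjugate transpose, is a
bimodule over the commutant of `M`, and is trace-orthogonal to the commutant of `M`. -/
def IsQuantumGraph {I : Type*} [Fintype I]
    (S : Submodule ℂ (Matrix I I ℂ)) (M : Set (Matrix I I ℂ)) : Prop :=
  (∀ X ∈ S, Xᴴ ∈ S) ∧
  (∀ A ∈ commutant M, ∀ B ∈ commutant M, ∀ X ∈ S, A * X * B ∈ S) ∧
  (∀ X ∈ S, ∀ A ∈ commutant M, Matrix.trace (X * Aᴴ) = 0)

/-- Product of the matrices `P a`, `a ∈ T`, taken in increasing order of indices. -/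
def finsetProd {β : Type*} [Monoid β] {c : ℕ} (P : Fin c → β) (T : Finset (Fin c)) : β :=
  ((T.sort (· ≤ ·)).map P).prod

/-- A quantum `c`-coloring of `(S, M)` (with auxiliary algebra `M_k(ℂ)`). -/
def IsQColoring {I : Type*} [Fintype I] [DecidableEq I] {c k : ℕ}
    (S : Submodule ℂ (Matrix I I ℂ)) (M : Set (Matrix I I ℂ))
    (P : Fin c → Matrix (I × Fin k) (I × Fin k) ℂ) : Prop :=
  (∀ a, P a ∈ tensorSpan M (Set.univ : Set (Matrix (Fin k) (Fin k) ℂ))) ∧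
  (∀ a, (P a)ᴴ = P a) ∧
  (∀ a, P a * P a = P a) ∧
  ((∑ a, P a) = 1) ∧
  (∀ X ∈ S, ∀ a, P a * (X ⊗ₖ (1 : Matrix (Fin k) (Fin k) ℂ)) * P a = 0)

def HasQColoring {I : Type*} [Fintype I] [DecidableEq I]
    (S : Submodule ℂ (Matrix I I ℂ)) (M : Set (Matrix I I ℂ)) (c : ℕ) : Prop :=
  ∃ k : ℕ, 1 ≤ k ∧ ∃ P : Fin c → Matrix (I × Fin k) (I × Fin k) ℂ, IsQColoring S M P

/-- The quantum chromatic number `χ_q(S, M) ∈ ℕ∞`. -/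
def qChrom {I : Type*} [Fintype I] [DecidableEq I]
    (S : Submodule ℂ (Matrix I I ℂ)) (M : Set (Matrix I I ℂ)) : ℕ∞ :=
  ⨅ (c : ℕ) (_ : HasQColoring S M c), (c : ℕ∞)

/-- A quantum `b`-fold coloring of `(S, M)` using `c` colors
(with auxiliary algebra `M_k(ℂ)`). -/
def IsQBFoldColoring {I : Type*} [Fintype I] [DecidableEq I] {c k : ℕ}
    (S : Submodule ℂ (Matrix I I ℂ)) (M : Set (Matrix I I ℂ)) (b : ℕ)
    (P : Fin c → Matrix (I × Fin k) (I × Fin k) ℂ) : Prop :=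
  (∀ a, P a ∈ tensorSpan M (Set.univ : Set (Matrix (Fin k) (Fin k) ℂ))) ∧
  (∀ a a', P a * P a' = P a' * P a) ∧
  (∀ a, (P a)ᴴ = P a) ∧
  (∀ a, P a * P a = P a) ∧
  ((∑ T ∈ Finset.univ.powersetCard b, finsetProd P T) = 1) ∧
  (∀ X ∈ S, ∀ a, P a * (X ⊗ₖ (1 : Matrix (Fin k) (Fin k) ℂ)) * P a = 0)

def HasQBFoldColoring {I : Type*} [Fintype I] [DecidableEq I]
    (S : Submodule ℂ (Matrix I I ℂ)) (M : Set (Matrix I I ℂ)) (b c : ℕ) : Prop :=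
  ∃ k : ℕ, 1 ≤ k ∧ ∃ P : Fin c → Matrix (I × Fin k) (I × Fin k) ℂ, IsQBFoldColoring S M b P

/-- The quantum `b`-fold chromatic number `χ_{b,q}(S, M) ∈ ℕ∞`. -/
def qbChrom {I : Type*} [Fintype I] [DecidableEq I]
    (S : Submodule ℂ (Matrix I I ℂ)) (M : Set (Matrix I I ℂ)) (b : ℕ) : ℕ∞ :=
  ⨅ (c : ℕ) (_ : HasQBFoldColoring S M b c), (c : ℕ∞)

/-- A local `b`-fold coloring of `(S, M)` using `c` colors (projections in `M` itself). -/
def IsLocalBFoldColoring {I : Type*} [Fintype I] [DecidableEq I] {c : ℕ}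
    (S : Submodule ℂ (Matrix I I ℂ)) (M : Set (Matrix I I ℂ)) (b : ℕ)
    (P : Fin c → Matrix I I ℂ) : Prop :=
  (∀ a, P a ∈ M) ∧
  (∀ a a', P a * P a' = P a' * P a) ∧
  (∀ a, (P a)ᴴ = P a) ∧
  (∀ a, P a * P a = P a) ∧
  ((∑ T ∈ Finset.univ.powersetCard b, finsetProd P T) = 1) ∧
  (∀ X ∈ S, ∀ a, P a * X * P a = 0)

def HasLocalBFoldColoring {I : Type*} [Fintype I] [DecidableEq I]
    (S : Submodule ℂ (Matrix I I ℂ)) (M : Set (Matrix I I ℂ)) (b c : ℕ) : Prop :=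
  ∃ P : Fin c → Matrix I I ℂ, IsLocalBFoldColoring S M b P

/-- The local `b`-fold chromatic number. -/
def localBChrom {I : Type*} [Fintype I] [DecidableEq I]
    (S : Submodule ℂ (Matrix I I ℂ)) (M : Set (Matrix I I ℂ)) (b : ℕ) : ℕ∞ :=
  ⨅ (c : ℕ) (_ : HasLocalBFoldColoring S M b c), (c : ℕ∞)

/-- `S_G`: span of matrix units on edges of a simple graph. -/
def graphSpan {V : Type*} [Fintype V] [DecidableEq V] (G : SimpleGraph V) :
    Submodule ℂ (Matrix V V ℂ) :=
  Submodule.span ℂ {x | ∃ v w, G.Adj v w ∧ x = Matrix.single v w 1}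

/-- The partial trace over the first tensor factor. -/
def ptrace {I J : Type*} [Fintype I] (P : Matrix (I × J) (I × J) ℂ) : Matrix J J ℂ :=
  Matrix.of fun p q => ∑ i, P (i, p) (i, q)

/-- The complete quantum graph operator space: everything trace-orthogonal to `M'`. -/
def completeS {I : Type*} [Fintype I] (M : Set (Matrix I I ℂ)) :
    Submodule ℂ (Matrix I I ℂ) where
  carrier := {X | ∀ A ∈ commutant M, Matrix.trace (X * Aᴴ) = 0}
  add_mem' := by
    intro x y hx hy A hA
    rw [Set.mem_setOf_eq] at *
    rw [Matrix.add_mul, Matrix.trace_add, hx A hA, hy A hA, add_zero]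
  zero_mem' := by
    intro A hA
    rw [Matrix.zero_mul, Matrix.trace_zero]
  smul_mem' := by
    intro r x hx A hA
    rw [Set.mem_setOf_eq] at *
    rw [Matrix.smul_mul, Matrix.trace_smul, hx A hA, smul_zero]


set_option linter.unusedSectionVars false

lemma commring_orthog {A : Type*} [CommRing A] {c b : ℕ} (hb : 1 ≤ b)
    (e : Fin c → A) (hidem : ∀ i, e i * e i = e i)
    (htf : ∀ (N : ℕ) (x : A), N ≠ 1 → (N : A) * x = x → x = 0)
    (hsum : ∑ T ∈ Finset.univ.powersetCard b, ∏ t ∈ T, e t = 1) :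
    ∀ T ∈ Finset.univ.powersetCard b, ∀ T' ∈ Finset.univ.powersetCard b, T ≠ T' →
      (∏ t ∈ T, e t) * ∏ t ∈ T', e t = 0 := by
  classical
  set E : Finset (Fin c) → A := fun V => (∏ t ∈ V, e t) * ∏ t ∈ Vᶜ, (1 - e t) with hE
  have hprodsq : ∀ T : Finset (Fin c), (∏ t ∈ T, e t) * ∏ t ∈ T, e t = ∏ t ∈ T, e t := by
    intro T
    rw [← Finset.prod_mul_distrib]
    exact Finset.prod_congr rfl fun t _ => hidem t
  -- (1) sum of E over all subsets is 1
  have hEsum : ∑ V ∈ (Finset.univ : Finset (Fin c)).powerset, E V = 1 := by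
    have h := Finset.prod_add e (fun t => 1 - e t) (Finset.univ : Finset (Fin c))
    simp only [add_sub_cancel, Finset.prod_const_one] at h
    rw [h]
    apply Finset.sum_congr rfl
    intro V _
    rw [hE]
    simp only [Finset.compl_eq_univ_sdiff]
  -- (2)/(3) : product of ∏_T e with E V
  have hmulE : ∀ T V : Finset (Fin c), (∏ t ∈ T, e t) * E V = if T ⊆ V then E V else 0 := by
    intro T V
    by_cases hTV : T ⊆ V
    · rw [if_pos hTV, hE]
      have h1 : ∏ t ∈ V, e t = (∏ t ∈ T, e t) * ∏ t ∈ V \ T, e t := by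
        rw [mul_comm, Finset.prod_sdiff hTV]
      dsimp only
      rw [h1, ← mul_assoc, ← mul_assoc, hprodsq]
    · rw [if_neg hTV]
      obtain ⟨t, htT, htV⟩ := Finset.not_subset.mp hTV
      have h1 : ∏ s ∈ T, e s = e t * ∏ s ∈ T.erase t, e s := (Finset.mul_prod_erase _ _ htT).symm
      have h2 : ∏ s ∈ Vᶜ, (1 - e s) = (1 - e t) * ∏ s ∈ Vᶜ.erase t, (1 - e s) :=
        (Finset.mul_prod_erase _ _ (Finset.mem_compl.mpr htV)).symm
      have h3 : e t * (1 - e t) = 0 := by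
        rw [mul_sub, mul_one, hidem, sub_self]
      rw [hE]
      dsimp only
      rw [h1, h2]
      linear_combination ((∏ s ∈ T.erase t, e s) * (∏ s ∈ V, e s) *
        (∏ s ∈ Vᶜ.erase t, (1 - e s))) * h3
  -- (5) E V = 0 unless V has exactly b elements
  have hEzero : ∀ V : Finset (Fin c), V.card ≠ b → E V = 0 := by
    intro V hV
    have h4 : (V.card.choose b) • E V = E V := by
      have h5 : ∑ T ∈ Finset.univ.powersetCard b, (∏ t ∈ T, e t) * E V = E V := by
        rw [← Finset.sum_mul, hsum, one_mul]
      rw [Finset.sum_congr rfl (fun T _ => hmulE T V), Finset.sum_ite,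
        Finset.sum_const_zero, add_zero, Finset.sum_const] at h5
      rw [← h5]
      congr 1
      have h6 : Finset.filter (fun T => T ⊆ V) (Finset.univ.powersetCard b)
          = V.powersetCard b := by
        ext T
        simp only [Finset.mem_filter, Finset.mem_powersetCard, Finset.subset_univ, true_and]
        tauto
      rw [h6, Finset.card_powersetCard]
    have hN : V.card.choose b ≠ 1 := by
      rcases lt_or_gt_of_ne hV with h | h
      · rw [Nat.choose_eq_zero_of_lt h]; omega
      · have : (b+1).choose b ≤ V.card.choose b := Nat.choose_le_choose b h
        rw [Nat.choose_succ_self_right] at this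
        omega
    rw [nsmul_eq_mul] at h4
    exact htf _ _ hN h4
  -- (7) conclusion
  intro T hT T' hT' hne
  have hcT : T.card = b := (Finset.mem_powersetCard.mp hT).2
  have hcT' : T'.card = b := (Finset.mem_powersetCard.mp hT').2
  have expand : ∏ t ∈ T', e t = ∑ V ∈ Finset.univ.powerset, if T' ⊆ V then E V else 0 := by
    calc ∏ t ∈ T', e t = (∏ t ∈ T', e t) * ∑ V ∈ Finset.univ.powerset, E V := by
          rw [hEsum, mul_one]
      _ = ∑ V ∈ Finset.univ.powerset, (∏ t ∈ T', e t) * E V := Finset.mul_sum ..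
      _ = _ := Finset.sum_congr rfl fun V _ => hmulE T' V
  rw [expand, Finset.mul_sum]
  apply Finset.sum_eq_zero
  intro V _
  by_cases hsub : T' ⊆ V
  · rw [if_pos hsub, hmulE T V]
    by_cases hsub2 : T ⊆ V
    · rw [if_pos hsub2]
      apply hEzero
      intro hVb
      have e1 : T = V := Finset.eq_of_subset_of_card_le hsub2 (by rw [hVb, hcT])
      have e2 : T' = V := Finset.eq_of_subset_of_card_le hsub (by rw [hVb, hcT'])
      exact hne (e1.trans e2.symm)
    · rw [if_neg hsub2]
  · rw [if_neg hsub, mul_zero]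


section Kron

variable {I J : Type*} [Fintype I] [Fintype J] [DecidableEq I] [DecidableEq J]

lemma kron_conjT (A : Matrix I I ℂ) (B : Matrix J J ℂ) :
    (A ⊗ₖ B)ᴴ = Aᴴ ⊗ₖ Bᴴ := by
  ext ⟨i, j⟩ ⟨i', j'⟩
  simp [Matrix.conjTranspose_apply, Matrix.kroneckerMap_apply, star_mul']

lemma sum_kron {ι : Type*} (s : Finset ι) (f : ι → Matrix I I ℂ) (B : Matrix J J ℂ) :
    (∑ i ∈ s, f i) ⊗ₖ B = ∑ i ∈ s, (f i ⊗ₖ B) := by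
  induction s using Finset.cons_induction with
  | empty => simp [Matrix.zero_kronecker]
  | cons a s ha ih => rw [Finset.sum_cons, Finset.sum_cons, Matrix.add_kronecker, ih]

lemma kron_sum {ι : Type*} (s : Finset ι) (A : Matrix I I ℂ) (f : ι → Matrix J J ℂ) :
    A ⊗ₖ (∑ i ∈ s, f i) = ∑ i ∈ s, (A ⊗ₖ f i) := by
  induction s using Finset.cons_induction with
  | empty => simp [Matrix.kronecker_zero]
  | cons a s ha ih => rw [Finset.sum_cons, Finset.sum_cons, Matrix.kronecker_add, ih]

lemma tensorSpan_mul_mem {M : Set (Matrix I I ℂ)} (hM : ∀ x ∈ M, ∀ y ∈ M, x * y ∈ M)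
    {x y : Matrix (I × J) (I × J) ℂ}
    (hx : x ∈ tensorSpan M Set.univ) (hy : y ∈ tensorSpan M Set.univ) :
    x * y ∈ tensorSpan M Set.univ := by
  induction hx, hy using Submodule.span_induction₂ with
  | mem_mem u v hu hv =>
    obtain ⟨a, ha, b, -, rfl⟩ := hu
    obtain ⟨a', ha', b', -, rfl⟩ := hv
    rw [← Matrix.mul_kronecker_mul]
    exact Submodule.subset_span ⟨a * a', hM a ha a' ha', b * b', trivial, rfl⟩
  | zero_left y hy => rw [zero_mul]; exact Submodule.zero_mem _
  | zero_right x hx => rw [mul_zero]; exact Submodule.zero_mem _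
  | add_left x y z hx hy hz h1 h2 => rw [add_mul]; exact Submodule.add_mem _ h1 h2
  | add_right x y z hx hy hz h1 h2 => rw [mul_add]; exact Submodule.add_mem _ h1 h2
  | smul_left r x y hx hy h => rw [smul_mul_assoc]; exact Submodule.smul_mem _ _ h
  | smul_right r x y hx hy h => rw [mul_smul_comm]; exact Submodule.smul_mem _ _ h

lemma tensorSpan_listProd_mem {M : Set (Matrix I I ℂ)} (hM : ∀ x ∈ M, ∀ y ∈ M, x * y ∈ M)
    (h1 : (1 : Matrix I I ℂ) ∈ M) (l : List (Matrix (I × J) (I × J) ℂ))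
    (hl : ∀ x ∈ l, x ∈ tensorSpan M Set.univ) : l.prod ∈ tensorSpan M Set.univ := by
  induction l with
  | nil =>
    rw [List.prod_nil]
    exact Submodule.subset_span ⟨1, h1, 1, trivial, Matrix.one_kronecker_one.symm⟩
  | cons a l ih =>
    rw [List.prod_cons]
    exact tensorSpan_mul_mem hM (hl a List.mem_cons_self)
      (ih fun x hx => hl x (List.mem_cons_of_mem a hx))

lemma tensorSpan_commute {M : Set (Matrix I I ℂ)} {v : Matrix I I ℂ} (hv : v ∈ commutant M)
    {x : Matrix (I × J) (I × J) ℂ} (hx : x ∈ tensorSpan M Set.univ) :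
    (v ⊗ₖ (1 : Matrix J J ℂ)) * x = x * (v ⊗ₖ (1 : Matrix J J ℂ)) := by
  induction hx using Submodule.span_induction with
  | mem u hu =>
    obtain ⟨a, ha, b, -, rfl⟩ := hu
    rw [← Matrix.mul_kronecker_mul, ← Matrix.mul_kronecker_mul, one_mul, mul_one, hv a ha]
  | zero => rw [zero_mul, mul_zero]
  | add x y hx hy h1 h2 => rw [mul_add, add_mul, h1, h2]
  | smul r x hx h => rw [mul_smul_comm, smul_mul_assoc, h]

end Kron

section Shuffle

def shuffle (n m k2 k1 : ℕ) :
    ((Fin n × Fin k2) × (Fin m × Fin k1)) ≃ ((Fin n × Fin m) × Fin (k2 * k1)) :=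
  (Equiv.prodProdProdComm (Fin n) (Fin k2) (Fin m) (Fin k1)).trans
    (Equiv.prodCongr (Equiv.refl _) finProdFinEquiv)

variable {n m k2 k1 : ℕ}

lemma shuffle_kron (A : Matrix (Fin n) (Fin n) ℂ) (C : Matrix (Fin k2) (Fin k2) ℂ)
    (B : Matrix (Fin m) (Fin m) ℂ) (D : Matrix (Fin k1) (Fin k1) ℂ) :
    Matrix.reindex (shuffle n m k2 k1) (shuffle n m k2 k1) ((A ⊗ₖ C) ⊗ₖ (B ⊗ₖ D))
      = (A ⊗ₖ B) ⊗ₖ (Matrix.reindex finProdFinEquiv finProdFinEquiv (C ⊗ₖ D)) := by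
  ext ⟨⟨i, p⟩, s⟩ ⟨⟨i', p'⟩, s'⟩
  simp only [Matrix.reindex_apply, Matrix.submatrix_apply, shuffle, Equiv.symm_trans_apply,
    Equiv.prodCongr_symm, Equiv.refl_symm, Equiv.prodCongr_apply, Equiv.coe_refl, Prod.map,
    Equiv.prodProdProdComm_symm, Equiv.prodProdProdComm_apply, Matrix.kroneckerMap_apply, id]
  obtain ⟨x1, x2⟩ := finProdFinEquiv.symm s
  obtain ⟨y1, y2⟩ := finProdFinEquiv.symm s'
  ring

end Shuffle

section Bridge

variable {d : Type*} [Fintype d] [DecidableEq d] {c : ℕ}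

lemma finsetProd_package {b : ℕ} (hb : 1 ≤ b) (P : Fin c → Matrix d d ℂ)
    (hcomm : ∀ i j, P i * P j = P j * P i) (hidem : ∀ i, P i * P i = P i)
    (hsum : ∑ T ∈ Finset.univ.powersetCard b, finsetProd P T = 1) :
    (∀ T, finsetProd P T * finsetProd P T = finsetProd P T) ∧
    (∀ a (T : Finset (Fin c)), a ∈ T → finsetProd P T = P a * finsetProd P (T.erase a) ∧
       finsetProd P T = finsetProd P (T.erase a) * P a) ∧
    (∀ T ∈ Finset.univ.powersetCard b, ∀ T' ∈ Finset.univ.powersetCard b, T ≠ T' →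
      finsetProd P T * finsetProd P T' = 0) := by
  classical
  set A := Algebra.adjoin ℂ (Set.range P) with hA
  letI : CommRing A :=
    Algebra.adjoinCommRingOfComm ℂ (by rintro _ ⟨i, rfl⟩ _ ⟨j, rfl⟩; exact hcomm i j)
  let e : Fin c → A := fun i => ⟨P i, Algebra.subset_adjoin ⟨i, rfl⟩⟩
  have hlist : ∀ (l : List A), ((l.prod : A) : Matrix d d ℂ) = (l.map Subtype.val).prod := by
    intro l
    induction l with
    | nil => rfl
    | cons a l ih => simp only [List.map_cons, List.prod_cons]; rw [← ih]; rfl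
  have hsumc : ∀ {ι : Type} (s : Finset ι) (f : ι → A),
      ((∑ i ∈ s, f i : A) : Matrix d d ℂ) = ∑ i ∈ s, (f i : Matrix d d ℂ) := by
    intro ι s f
    induction s using Finset.cons_induction with
    | empty => rfl
    | cons a s ha ih => rw [Finset.sum_cons, Finset.sum_cons, ← ih]; rfl
  have key : ∀ T : Finset (Fin c),
      finsetProd P T = ((∏ t ∈ T, e t : A) : Matrix d d ℂ) := by
    intro T
    have h0 : ∏ t ∈ T, e t = ((T.sort (· ≤ ·)).map e).prod := by
      rw [Finset.prod_eq_multiset_prod, ← Finset.sort_eq T (· ≤ ·), Multiset.map_coe,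
        Multiset.prod_coe]
    rw [finsetProd, h0, hlist, List.map_map]
    rfl
  have hvalinj : ∀ x y : A, (x : Matrix d d ℂ) = (y : Matrix d d ℂ) → x = y :=
    fun x y h => Subtype.ext h
  have hidem' : ∀ i, e i * e i = e i := fun i => Subtype.ext (hidem i)
  refine ⟨?_, ?_, ?_⟩
  · intro T
    rw [key, show ((∏ t ∈ T, e t : A) : Matrix d d ℂ) * ((∏ t ∈ T, e t : A) : Matrix d d ℂ)
        = (((∏ t ∈ T, e t) * ∏ t ∈ T, e t : A) : Matrix d d ℂ) from rfl]
    congr 1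
    rw [← Finset.prod_mul_distrib]
    exact Finset.prod_congr rfl fun t _ => hidem' t
  · intro a T ha
    constructor
    · rw [key, key, show P a * ((∏ t ∈ T.erase a, e t : A) : Matrix d d ℂ)
        = ((e a * ∏ t ∈ T.erase a, e t : A) : Matrix d d ℂ) from rfl,
        Finset.mul_prod_erase _ _ ha]
    · rw [key, key, show ((∏ t ∈ T.erase a, e t : A) : Matrix d d ℂ) * P a
        = (((∏ t ∈ T.erase a, e t) * e a : A) : Matrix d d ℂ) from rfl,
        Finset.prod_erase_mul _ _ ha]
  · intro T hT T' hT' hne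
    have hsum' : ∑ T ∈ Finset.univ.powersetCard b, ∏ t ∈ T, e t = 1 := by
      apply hvalinj
      rw [hsumc, ← Finset.sum_congr rfl fun T _ => key T, hsum]
      rfl
    have htf : ∀ (N : ℕ) (x : A), N ≠ 1 → (N : A) * x = x → x = 0 := by
      intro N x hN hx
      apply hvalinj _ 0
      have hx' : (N : Matrix d d ℂ) * (x : Matrix d d ℂ) = (x : Matrix d d ℂ) := by
        rw [show (N : Matrix d d ℂ) * (x : Matrix d d ℂ)
          = (((N : A) * x : A) : Matrix d d ℂ) from rfl, hx]
      have hx'' : (N : ℂ) • (x : Matrix d d ℂ) = (x : Matrix d d ℂ) := by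
        rw [Nat.cast_smul_eq_nsmul, nsmul_eq_mul]
        exact hx'
      have hsm : ((N : ℂ) - 1) • (x : Matrix d d ℂ) = 0 := by
        rw [sub_smul, one_smul, hx'', sub_self]
      have hc0 : ((N : ℂ) - 1) ≠ 0 := by
        rw [sub_ne_zero]
        exact_mod_cast hN
      have := smul_eq_zero.mp hsm
      tauto
    have := commring_orthog hb e hidem' htf hsum' T hT T' hT' hne
    rw [key, key, show ((∏ t ∈ T, e t : A) : Matrix d d ℂ) * ((∏ t ∈ T', e t : A) : Matrix d d ℂ)
        = (((∏ t ∈ T, e t) * ∏ t ∈ T', e t : A) : Matrix d d ℂ) from rfl, this]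
    rfl

end Bridge

section Main

variable {n m : ℕ}

lemma main_construction {b c k1 k2 : ℕ} (hb : 1 ≤ b) (hk1 : 1 ≤ k1) (hk2 : 1 ≤ k2)
    (SG : Submodule ℂ (Matrix (Fin n) (Fin n) ℂ)) (MG : Set (Matrix (Fin n) (Fin n) ℂ))
    (SH : Submodule ℂ (Matrix (Fin m) (Fin m) ℂ)) (MH : Set (Matrix (Fin m) (Fin m) ℂ))
    (hMG1 : (1 : Matrix (Fin n) (Fin n) ℂ) ∈ MG)
    (hMGmul : ∀ x ∈ MG, ∀ y ∈ MG, x * y ∈ MG)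
    (Q : Fin b → Matrix (Fin m × Fin k1) (Fin m × Fin k1) ℂ) (hQ : IsQColoring SH MH Q)
    (P : Fin c → Matrix (Fin n × Fin k2) (Fin n × Fin k2) ℂ) (hP : IsQBFoldColoring SG MG b P) :
    HasQColoring
      (tensorSpan (SG : Set (Matrix (Fin n) (Fin n) ℂ)) Set.univ
        ⊔ tensorSpan (commutant MG) (SH : Set (Matrix (Fin m) (Fin m) ℂ)))
      ((tensorSpan MG MH : Submodule ℂ (Matrix (Fin n × Fin m) (Fin n × Fin m) ℂ)) :
        Set (Matrix (Fin n × Fin m) (Fin n × Fin m) ℂ)) c := by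
  classical
  obtain ⟨hQmem, hQsa, hQidem, hQsum, hQedge⟩ := hQ
  obtain ⟨hPmem, hPcomm, hPsa, hPidem, hPsum, hPedge⟩ := hP
  obtain ⟨hfpidem, hferase, hforth⟩ := finsetProd_package hb P hPcomm hPidem hPsum
  set F := Matrix.reindexAlgEquiv ℂ ℂ (shuffle n m k2 k1) with hF
  set j : Fin c → Finset (Fin c) → Fin b := fun a T =>
    if h : a ∈ T ∧ T.card = b then (T.orderIsoOfFin h.2).symm ⟨a, h.1⟩ else ⟨0, hb⟩ with hjdef
  set s : Fin c → Finset (Finset (Fin c)) := fun a =>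
    (Finset.univ.powersetCard b).filter (fun T => a ∈ T) with hsdef
  set R : Fin c → Matrix ((Fin n × Fin m) × Fin (k2 * k1)) ((Fin n × Fin m) × Fin (k2 * k1)) ℂ :=
    fun a => F (∑ T ∈ s a, finsetProd P T ⊗ₖ Q (j a T)) with hRdef
  have hsmem : ∀ {a T}, T ∈ s a → a ∈ T ∧ T.card = b := by
    intro a T hT
    rw [hsdef] at hT
    simp only [Finset.mem_filter, Finset.mem_powersetCard, Finset.subset_univ, true_and] at hT
    exact ⟨hT.2, hT.1⟩
  have hspow : ∀ {a T}, T ∈ s a → T ∈ Finset.univ.powersetCard b := by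
    intro a T hT
    exact Finset.mem_of_mem_filter T hT
  have hPTmem : ∀ T, finsetProd P T ∈ tensorSpan MG Set.univ := by
    intro T
    apply tensorSpan_listProd_mem hMGmul hMG1
    intro x hx
    obtain ⟨i, -, rfl⟩ := List.mem_map.mp hx
    exact hPmem i
  have hmap : ∀ (Y : Matrix (Fin n × Fin k2) (Fin n × Fin k2) ℂ), Y ∈ tensorSpan MG Set.univ →
      ∀ (Z : Matrix (Fin m × Fin k1) (Fin m × Fin k1) ℂ), Z ∈ tensorSpan MH Set.univ →
      F (Y ⊗ₖ Z) ∈ tensorSpan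
        ((tensorSpan MG MH : Submodule ℂ (Matrix (Fin n × Fin m) (Fin n × Fin m) ℂ)) :
          Set (Matrix (Fin n × Fin m) (Fin n × Fin m) ℂ)) Set.univ := by
    intro Y hY
    induction hY using Submodule.span_induction with
    | mem u hu =>
      intro Z hZ
      induction hZ using Submodule.span_induction with
      | mem w hw =>
        obtain ⟨A, hA, C, -, rfl⟩ := hu
        obtain ⟨B, hB, D, -, rfl⟩ := hw
        rw [hF, Matrix.reindexAlgEquiv_apply, shuffle_kron A C B D]
        exact Submodule.subset_span
          ⟨A ⊗ₖ B, Submodule.subset_span ⟨A, hA, B, hB, rfl⟩, _, trivial, rfl⟩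
      | zero => rw [Matrix.kronecker_zero, map_zero]; exact Submodule.zero_mem _
      | add x y hx hy h1 h2 =>
        rw [Matrix.kronecker_add, map_add]; exact Submodule.add_mem _ h1 h2
      | smul r x hx h =>
        rw [Matrix.kronecker_smul, _root_.map_smul]; exact Submodule.smul_mem _ _ h
    | zero => intro Z hZ; rw [Matrix.zero_kronecker, map_zero]; exact Submodule.zero_mem _
    | add x y hx hy h1 h2 =>
      intro Z hZ
      rw [Matrix.add_kronecker, map_add]; exact Submodule.add_mem _ (h1 Z hZ) (h2 Z hZ)
    | smul r x hx h =>
      intro Z hZ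
      rw [Matrix.smul_kronecker, _root_.map_smul]; exact Submodule.smul_mem _ _ (h Z hZ)
  refine ⟨k2 * k1, Nat.one_le_iff_ne_zero.mpr (by positivity), R, ?_, ?_, ?_, ?_, ?_⟩
  · -- membership
    intro a
    rw [hRdef]
    dsimp only
    rw [map_sum]
    apply Submodule.sum_mem
    intro T hT
    exact hmap _ (hPTmem T) _ (hQmem (j a T))
  · -- self-adjoint
    intro a
    have hPTsa : ∀ T, (finsetProd P T)ᴴ = finsetProd P T := by
      intro T
      rw [finsetProd]
      generalize T.sort (· ≤ ·) = l
      induction l with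
      | nil => simp
      | cons i l ih =>
        rw [List.map_cons, List.prod_cons, Matrix.conjTranspose_mul, ih, hPsa]
        exact (Commute.list_prod_right _ _ (by
          intro x hx
          obtain ⟨i', -, rfl⟩ := List.mem_map.mp hx
          exact hPcomm i i')).symm.eq
    rw [hRdef]
    dsimp only
    rw [hF, Matrix.reindexAlgEquiv_apply]
    rw [show (Matrix.reindex (shuffle n m k2 k1) (shuffle n m k2 k1)
      (∑ T ∈ s a, finsetProd P T ⊗ₖ Q (j a T)))ᴴ
      = Matrix.reindex (shuffle n m k2 k1) (shuffle n m k2 k1)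
        (∑ T ∈ s a, finsetProd P T ⊗ₖ Q (j a T))ᴴ from
      (Matrix.conjTranspose_reindex _ _ _).symm]
    congr 1
    rw [Matrix.conjTranspose_sum]
    apply Finset.sum_congr rfl
    intro T hT
    rw [kron_conjT, hPTsa, hQsa]
  · -- idempotent
    intro a
    rw [hRdef]
    dsimp only
    rw [← _root_.map_mul, Finset.sum_mul_sum]
    congr 1
    apply Finset.sum_congr rfl
    intro T hT
    rw [Finset.sum_eq_single T]
    · rw [← Matrix.mul_kronecker_mul, hfpidem, hQidem]
    · intro T' hT' hne
      rw [← Matrix.mul_kronecker_mul, hforth T (hspow hT) T' (hspow hT') hne.symm,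
        Matrix.zero_kronecker]
    · intro h
      exact absurd hT h
  · -- sum is one
    have step1 : ∑ a, R a = F (∑ T ∈ Finset.univ.powersetCard b,
        ∑ a ∈ T, finsetProd P T ⊗ₖ Q (j a T)) := by
      rw [hRdef, ← map_sum]
      congr 1
      rw [Finset.sum_congr rfl (fun a _ => Finset.sum_filter _ _), Finset.sum_comm]
      apply Finset.sum_congr rfl
      intro T hT
      rw [Finset.sum_ite_mem, Finset.univ_inter]
    rw [step1]
    have step2 : ∀ T ∈ Finset.univ.powersetCard b,
        ∑ a ∈ T, finsetProd P T ⊗ₖ Q (j a T) = finsetProd P T ⊗ₖ (1 : Matrix (Fin m × Fin k1) (Fin m × Fin k1) ℂ) := by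
      intro T hT
      have hTb : T.card = b := (Finset.mem_powersetCard.mp hT).2
      have hbij : ∑ a' ∈ T, Q (j a' T) = ∑ i : Fin b, Q i := by
        apply Finset.sum_bij' (i := fun a _ => j a T)
          (j := fun i _ => ((T.orderIsoOfFin hTb) i : Fin c))
        · intro i _
          exact Finset.mem_univ _
        · intro i _
          exact ((T.orderIsoOfFin hTb) i).2
        · intro a ha
          rw [hjdef]
          dsimp only
          rw [dif_pos ⟨ha, hTb⟩]
          have h9 : (⟨a, ha⟩ : {x // x ∈ T}) = (T.orderIsoOfFin hTb) ((T.orderIsoOfFin hTb).symm ⟨a, ha⟩) := by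
            rw [OrderIso.apply_symm_apply]
          exact congrArg Subtype.val h9.symm ▸ rfl
        · intro i _
          rw [hjdef]
          dsimp only
          rw [dif_pos ⟨((T.orderIsoOfFin hTb) i).2, hTb⟩]
          rw [show (⟨((T.orderIsoOfFin hTb) i : Fin c), _⟩ : {x // x ∈ T}) = (T.orderIsoOfFin hTb) i from rfl,
            OrderIso.symm_apply_apply]
        · intro a ha
          rfl
      rw [← kron_sum, hbij, hQsum]
    rw [Finset.sum_congr rfl step2, ← sum_kron, hPsum, Matrix.one_kronecker_one, _root_.map_one]
  · -- edge condition
    intro X hX a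
    have hone : ((1 : Matrix (Fin n × Fin m) (Fin n × Fin m) ℂ)) = 1 := rfl
    -- the set of X satisfying the conclusion is a submodule
    let K : Submodule ℂ (Matrix (Fin n × Fin m) (Fin n × Fin m) ℂ) :=
      { carrier := {X | R a * (X ⊗ₖ (1 : Matrix (Fin (k2 * k1)) (Fin (k2 * k1)) ℂ)) * R a = 0}
        add_mem' := by
          intro x y hx hy
          simp only [Set.mem_setOf_eq] at *
          rw [Matrix.add_kronecker, mul_add, add_mul, hx, hy, add_zero]
        zero_mem' := by
          simp only [Set.mem_setOf_eq, Matrix.zero_kronecker, mul_zero, zero_mul]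
        smul_mem' := by
          intro r x hx
          simp only [Set.mem_setOf_eq] at *
          rw [Matrix.smul_kronecker, mul_smul_comm, smul_mul_assoc, hx, smul_zero] }
    suffices hK : (tensorSpan (SG : Set (Matrix (Fin n) (Fin n) ℂ)) Set.univ
        ⊔ tensorSpan (commutant MG) (SH : Set (Matrix (Fin m) (Fin m) ℂ))) ≤ K by
      exact hK hX
    have hexpand : ∀ (v : Matrix (Fin n) (Fin n) ℂ) (w : Matrix (Fin m) (Fin m) ℂ),
        R a * ((v ⊗ₖ w) ⊗ₖ (1 : Matrix (Fin (k2 * k1)) (Fin (k2 * k1)) ℂ)) * R a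
        = F (∑ T ∈ s a, ∑ T' ∈ s a,
            (finsetProd P T * (v ⊗ₖ (1 : Matrix (Fin k2) (Fin k2) ℂ)) * finsetProd P T')
              ⊗ₖ (Q (j a T) * (w ⊗ₖ (1 : Matrix (Fin k1) (Fin k1) ℂ)) * Q (j a T'))) := by
      intro v w
      have hmid : (v ⊗ₖ w) ⊗ₖ (1 : Matrix (Fin (k2 * k1)) (Fin (k2 * k1)) ℂ)
          = F ((v ⊗ₖ (1 : Matrix (Fin k2) (Fin k2) ℂ)) ⊗ₖ (w ⊗ₖ (1 : Matrix (Fin k1) (Fin k1) ℂ))) := by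
        rw [hF, Matrix.reindexAlgEquiv_apply, shuffle_kron, Matrix.one_kronecker_one,
          Matrix.reindex_apply, Matrix.submatrix_one_equiv]
      rw [hRdef]
      dsimp only
      rw [hmid, ← _root_.map_mul, ← _root_.map_mul]
      congr 1
      rw [Finset.sum_mul, Finset.sum_mul]
      apply Finset.sum_congr rfl
      intro T hT
      rw [Finset.mul_sum]
      apply Finset.sum_congr rfl
      intro T' hT'
      rw [← Matrix.mul_kronecker_mul, ← Matrix.mul_kronecker_mul]
    rw [sup_le_iff]
    constructor
    · rw [tensorSpan, Submodule.span_le]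
      rintro x ⟨v, hv, w, -, rfl⟩
      show R a * ((v ⊗ₖ w) ⊗ₖ (1 : Matrix (Fin (k2 * k1)) (Fin (k2 * k1)) ℂ)) * R a = 0
      rw [hexpand]
      rw [show (0 : Matrix ((Fin n × Fin m) × Fin (k2 * k1)) ((Fin n × Fin m) × Fin (k2 * k1)) ℂ) = F 0 from (map_zero F).symm]
      congr 1
      apply Finset.sum_eq_zero
      intro T hT
      apply Finset.sum_eq_zero
      intro T' hT'
      have h1 : finsetProd P T * (v ⊗ₖ (1 : Matrix (Fin k2) (Fin k2) ℂ)) * finsetProd P T' = 0 := by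
        rw [(hferase a T (hsmem hT).1).2, (hferase a T' (hsmem hT').1).1]
        have : finsetProd P (T.erase a) * P a * (v ⊗ₖ (1 : Matrix (Fin k2) (Fin k2) ℂ)) *
            (P a * finsetProd P (T'.erase a))
            = finsetProd P (T.erase a) * (P a * (v ⊗ₖ (1 : Matrix (Fin k2) (Fin k2) ℂ)) * P a) *
              finsetProd P (T'.erase a) := by
          simp only [mul_assoc]
        rw [this, hPedge v hv a, mul_zero, zero_mul]
      rw [h1, Matrix.zero_kronecker]
    · rw [tensorSpan, Submodule.span_le]
      rintro x ⟨v, hv, w, hw, rfl⟩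
      show R a * ((v ⊗ₖ w) ⊗ₖ (1 : Matrix (Fin (k2 * k1)) (Fin (k2 * k1)) ℂ)) * R a = 0
      rw [hexpand]
      rw [show (0 : Matrix ((Fin n × Fin m) × Fin (k2 * k1)) ((Fin n × Fin m) × Fin (k2 * k1)) ℂ) = F 0 from (map_zero F).symm]
      congr 1
      apply Finset.sum_eq_zero
      intro T hT
      apply Finset.sum_eq_zero
      intro T' hT'
      by_cases hTT : T = T'
      · subst hTT
        rw [hQedge w hw (j a T), Matrix.kronecker_zero]
      · have h1 : finsetProd P T * (v ⊗ₖ (1 : Matrix (Fin k2) (Fin k2) ℂ)) * finsetProd P T' = 0 := by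
          rw [mul_assoc, tensorSpan_commute hv (hPTmem T'), ← mul_assoc,
            hforth T (hspow hT) T' (hspow hT') hTT, zero_mul]
        rw [h1, Matrix.zero_kronecker]

lemma hasQColoring_of_isEmpty {I : Type*} [Fintype I] [DecidableEq I] [IsEmpty I]
    (S : Submodule ℂ (Matrix I I ℂ)) (M : Set (Matrix I I ℂ)) (c : ℕ) :
    HasQColoring S M c := by
  refine ⟨1, le_refl 1, fun _ => 0, fun a => Submodule.zero_mem _,
    fun a => Matrix.conjTranspose_zero, fun a => by rw [mul_zero], ?_, ?_⟩
  · ext i j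
    exact (IsEmpty.false i.1).elim
  · intro X _ a
    rw [zero_mul, mul_zero]

lemma iInf_nat_attained {p : ℕ → Prop} {b : ℕ}
    (h : (⨅ (c : ℕ) (_ : p c), (c : ℕ∞)) = (b : ℕ∞)) : p b := by
  classical
  have hne : ∃ c, p c := by
    by_contra hno
    push_neg at hno
    rw [show (⨅ (c : ℕ) (_ : p c), (c : ℕ∞)) = ⊤ from by simp [hno]] at h
    exact (ENat.top_ne_coe b) h
  have hle1 : (⨅ (c : ℕ) (_ : p c), (c : ℕ∞)) ≤ (Nat.find hne : ℕ∞) :=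
    iInf₂_le _ (Nat.find_spec hne)
  have hle2 : ((Nat.find hne : ℕ) : ℕ∞) ≤ ⨅ (c : ℕ) (_ : p c), (c : ℕ∞) :=
    le_iInf₂ fun c hc => Nat.cast_le.mpr (Nat.find_min' hne hc)
  have : ((Nat.find hne : ℕ) : ℕ∞) = (b : ℕ∞) := le_antisymm (h ▸ hle2) (h ▸ hle1)
  have hfb : Nat.find hne = b := Nat.cast_inj.mp this
  exact hfb ▸ Nat.find_spec hne

end Main

theorem lexicographic_bound {n m : ℕ}
    (SG : Submodule ℂ (Matrix (Fin n) (Fin n) ℂ))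
    (MG : StarSubalgebra ℂ (Matrix (Fin n) (Fin n) ℂ))
    (SH : Submodule ℂ (Matrix (Fin m) (Fin m) ℂ))
    (MH : StarSubalgebra ℂ (Matrix (Fin m) (Fin m) ℂ))
    (hG : IsQuantumGraph SG (MG : Set (Matrix (Fin n) (Fin n) ℂ)))
    (hH : IsQuantumGraph SH (MH : Set (Matrix (Fin m) (Fin m) ℂ))) :
    (∀ b c : ℕ, 1 ≤ b → 1 ≤ c →
      HasQColoring SH (MH : Set (Matrix (Fin m) (Fin m) ℂ)) b →
        HasQBFoldColoring SG (MG : Set (Matrix (Fin n) (Fin n) ℂ)) b c →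
          HasQColoring (tensorSpan (SG : Set (Matrix (Fin n) (Fin n) ℂ)) (Set.univ : Set (Matrix (Fin m) (Fin m) ℂ)) ⊔ tensorSpan (commutant (MG : Set (Matrix (Fin n) (Fin n) ℂ))) (SH : Set (Matrix (Fin m) (Fin m) ℂ))) ((tensorSpan (MG : Set (Matrix (Fin n) (Fin n) ℂ)) (MH : Set (Matrix (Fin m) (Fin m) ℂ)) : Submodule ℂ (Matrix (Fin n × Fin m) (Fin n × Fin m) ℂ)) : Set (Matrix (Fin n × Fin m) (Fin n × Fin m) ℂ)) c)
    ∧ (∀ b : ℕ, qChrom SH (MH : Set (Matrix (Fin m) (Fin m) ℂ)) = (b : ℕ∞) →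
        qChrom (tensorSpan (SG : Set (Matrix (Fin n) (Fin n) ℂ)) (Set.univ : Set (Matrix (Fin m) (Fin m) ℂ)) ⊔ tensorSpan (commutant (MG : Set (Matrix (Fin n) (Fin n) ℂ))) (SH : Set (Matrix (Fin m) (Fin m) ℂ))) ((tensorSpan (MG : Set (Matrix (Fin n) (Fin n) ℂ)) (MH : Set (Matrix (Fin m) (Fin m) ℂ)) : Submodule ℂ (Matrix (Fin n × Fin m) (Fin n × Fin m) ℂ)) : Set (Matrix (Fin n × Fin m) (Fin n × Fin m) ℂ)) ≤ qbChrom SG (MG : Set (Matrix (Fin n) (Fin n) ℂ)) b) := by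
  have hMG1 : (1 : Matrix (Fin n) (Fin n) ℂ) ∈ (MG : Set (Matrix (Fin n) (Fin n) ℂ)) :=
    MG.toSubalgebra.one_mem
  have hMGmul : ∀ x ∈ (MG : Set (Matrix (Fin n) (Fin n) ℂ)),
      ∀ y ∈ (MG : Set (Matrix (Fin n) (Fin n) ℂ)), x * y ∈ (MG : Set (Matrix (Fin n) (Fin n) ℂ)) :=
    fun x hx y hy => MG.toSubalgebra.mul_mem hx hy
  have hpart1 : ∀ b c : ℕ, 1 ≤ b → 1 ≤ c →
      HasQColoring SH (MH : Set (Matrix (Fin m) (Fin m) ℂ)) b →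
        HasQBFoldColoring SG (MG : Set (Matrix (Fin n) (Fin n) ℂ)) b c →
          HasQColoring (tensorSpan (SG : Set (Matrix (Fin n) (Fin n) ℂ)) (Set.univ : Set (Matrix (Fin m) (Fin m) ℂ)) ⊔ tensorSpan (commutant (MG : Set (Matrix (Fin n) (Fin n) ℂ))) (SH : Set (Matrix (Fin m) (Fin m) ℂ))) ((tensorSpan (MG : Set (Matrix (Fin n) (Fin n) ℂ)) (MH : Set (Matrix (Fin m) (Fin m) ℂ)) : Submodule ℂ (Matrix (Fin n × Fin m) (Fin n × Fin m) ℂ)) : Set (Matrix (Fin n × Fin m) (Fin n × Fin m) ℂ)) c := by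
    rintro b c hb hc ⟨k1, hk1, Q, hQ⟩ ⟨k2, hk2, P, hP⟩
    exact main_construction hb hk1 hk2 SG _ SH _ hMG1 hMGmul Q hQ P hP
  refine ⟨hpart1, ?_⟩
  intro b hqb
  refine le_iInf fun c => le_iInf fun hcol => ?_
  suffices hcolK : HasQColoring
      (tensorSpan (SG : Set (Matrix (Fin n) (Fin n) ℂ)) (Set.univ : Set (Matrix (Fin m) (Fin m) ℂ))
        ⊔ tensorSpan (commutant (MG : Set (Matrix (Fin n) (Fin n) ℂ))) (SH : Set (Matrix (Fin m) (Fin m) ℂ)))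
      ((tensorSpan (MG : Set (Matrix (Fin n) (Fin n) ℂ)) (MH : Set (Matrix (Fin m) (Fin m) ℂ)) :
        Submodule ℂ (Matrix (Fin n × Fin m) (Fin n × Fin m) ℂ)) :
        Set (Matrix (Fin n × Fin m) (Fin n × Fin m) ℂ)) c by
    exact iInf₂_le c hcolK
  by_cases hnm : n = 0 ∨ m = 0
  · have : IsEmpty (Fin n × Fin m) := by
      rcases hnm with h | h
      · subst h; exact ⟨fun p => p.1.elim0⟩
      · subst h; exact ⟨fun p => p.2.elim0⟩
    exact hasQColoring_of_isEmpty _ _ c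
  · push_neg at hnm
    obtain ⟨hn, hm⟩ := hnm
    have hHb : HasQColoring SH (MH : Set (Matrix (Fin m) (Fin m) ℂ)) b := iInf_nat_attained hqb
    have hb1 : 1 ≤ b := by
      by_contra hb0
      have hb0' : b = 0 := by omega
      subst hb0'
      obtain ⟨k, hk, Qf, ⟨-, -, -, hsum1, -⟩⟩ := hHb
      rw [Finset.univ_eq_empty, Finset.sum_empty] at hsum1
      have h2 := congrFun (congrFun hsum1
        (⟨⟨0, by omega⟩, ⟨0, by omega⟩⟩ : Fin m × Fin k)) (⟨⟨0, by omega⟩, ⟨0, by omega⟩⟩ : Fin m × Fin k)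
      simp [Matrix.zero_apply, Matrix.one_apply_eq] at h2
    have hc1 : 1 ≤ c := by
      by_contra hc0
      have hc0' : c = 0 := by omega
      subst hc0'
      obtain ⟨k2, hk2, Pf, ⟨-, -, -, -, hsum2, -⟩⟩ := hcol
      have hemp : (Finset.univ : Finset (Fin 0)).powersetCard b = ∅ := by
        apply Finset.eq_empty_of_forall_notMem
        intro T hT
        obtain ⟨hsub, hcard⟩ := Finset.mem_powersetCard.mp hT
        have : T.card ≤ 0 := by
          calc T.card ≤ (Finset.univ : Finset (Fin 0)).card := Finset.card_le_card hsub
            _ = 0 := by simp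
        omega
      rw [hemp, Finset.sum_empty] at hsum2
      have h2 := congrFun (congrFun hsum2
        (⟨⟨0, by omega⟩, ⟨0, by omega⟩⟩ : Fin n × Fin k2)) (⟨⟨0, by omega⟩, ⟨0, by omega⟩⟩ : Fin n × Fin k2)
      simp [Matrix.zero_apply, Matrix.one_apply_eq] at h2
    exact hpart1 b c hb1 hc1 hHb hcol


end
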